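/- Let N = Σᵢ 1{Xᵢ > γ} with ℓ_as = Σᵢ P(Xᵢ > γ) and r(γ) = ℓ_as − P(N ≥ 1). Under the mixture measure g, the m-th centered moment of ℓ̂₁ = ℓ_as/N around ℓ₁ = P(N ≥ 1) satisfies E_g|ℓ̂₁ − ℓ₁|^m = Θ(r^m(γ)) + Θ(ℓ_as^{m−1} r(γ)) as γ → ∞, assuming P(N > 1) = Θ(r(γ)) and P_g(N = 1) = Θ(1). -/

import Mathlib

open Filter Asymptotics

/-- Centered moments of the ISVE leading-term estimator
`ℓ̂₁ = ℓ_as/N` under the mixture measure `g`. With `p j γ = P(N = j)`,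
`P_g(N = j) = j p j γ / ℓ_as γ`, `ℓ₁ = P(N ≥ 1) = ∑_{j=1}^d p j`,
`r = ℓ_as − ℓ₁`, assuming `P(N > 1) = Θ(r)`, `P_g(N = 1) = Θ(1)` and
`r = o(ℓ_as)`, one has, for each `m ≥ 1`,
`E_g|ℓ̂₁ − ℓ₁|^m = Θ(r^m) + Θ(ℓ_as^{m−1} r)` as `γ → ∞`. -/
theorem isve_centered_moment_asymptotics
    (d : ℕ) (hd : 2 ≤ d) (p : ℕ → ℝ → ℝ) (ℓas ℓ1 r : ℝ → ℝ)
    (hp0 : ∀ᶠ γ in atTop, ∀ j, 0 ≤ p j γ)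
    (hℓ1 : ∀ γ, ℓ1 γ = ∑ j ∈ Finset.Icc 1 d, p j γ)
    (hr : ∀ γ, r γ = ℓas γ - ℓ1 γ)
    (hposr : ∀ᶠ γ in atTop, 0 < r γ)
    (hposl : ∀ᶠ γ in atTop, 0 < ℓas γ)
    (hro : r =o[atTop] ℓas)
    (hPg1 : (fun γ => p 1 γ / ℓas γ) =Θ[atTop] (fun _ => (1 : ℝ)))
    (hPgt : (fun γ => ∑ j ∈ Finset.Icc 2 d, p j γ) =Θ[atTop] r)
    (m : ℕ) (hm : 1 ≤ m) :
    (fun γ => ∑ j ∈ Finset.Icc 1 d,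
        |ℓas γ / (j : ℝ) - ℓ1 γ| ^ m * ((j : ℝ) * p j γ / ℓas γ))
      =Θ[atTop] (fun γ => r γ ^ m + ℓas γ ^ (m - 1) * r γ) := by
  obtain ⟨k, rfl⟩ : ∃ k, m = k + 1 := ⟨m - 1, (Nat.succ_pred_eq_of_pos hm).symm⟩
  simp only [Nat.add_sub_cancel]
  obtain ⟨C1, hC1pos, hC1⟩ := hPgt.isBigO.exists_pos
  obtain ⟨C2, hC2pos, hC2⟩ := hPgt.symm.isBigO.exists_pos
  obtain ⟨C3, hC3pos, hC3⟩ := hPg1.isBigO.exists_pos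
  obtain ⟨C4, hC4pos, hC4⟩ := hPg1.symm.isBigO.exists_pos
  rw [isBigOWith_iff] at hC1 hC2 hC3 hC4
  have hro' := hro.def (by norm_num : (0:ℝ) < 1/4)
  set F : ℝ → ℝ := fun γ => ∑ j ∈ Finset.Icc 1 d,
      |ℓas γ / (j : ℝ) - ℓ1 γ| ^ (k+1) * ((j : ℝ) * p j γ / ℓas γ) with hF
  set G : ℝ → ℝ := fun γ => r γ ^ (k+1) + ℓas γ ^ k * r γ with hG
  have hsplit : ∀ (f : ℕ → ℝ), ∑ j ∈ Finset.Icc 1 d, f j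
      = f 1 + ∑ j ∈ Finset.Icc 2 d, f j := by
    intro f
    rw [show Finset.Icc 1 d = insert 1 (Finset.Icc 2 d) by
      ext x; simp only [Finset.mem_Icc, Finset.mem_insert]; omega,
      Finset.sum_insert (by simp)]
  have key : ∀ᶠ γ in atTop, 0 ≤ F γ ∧ 0 ≤ G γ ∧
      F γ ≤ (C3 + (d:ℝ) * C1) * G γ ∧ G γ ≤ (C4 + 4^(k+1) * C2) * F γ := by
    filter_upwards [hp0, hposr, hposl, hro', hC1, hC2, hC3, hC4]
      with γ hp hR hL hro4 h1 h2 h3 h4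
    simp only [Real.norm_eq_abs, norm_one] at h1 h2 h3 h4 hro4
    set L := ℓas γ with hLdef
    set R := r γ with hRdef
    have hL0 : (0:ℝ) < L := hL
    have hR0 : (0:ℝ) < R := hR
    have hl1 : ℓ1 γ = L - R := by have := hr γ; linarith
    have hT0 : 0 ≤ ∑ j ∈ Finset.Icc 2 d, p j γ :=
      Finset.sum_nonneg fun j _ => hp j
    set T := ∑ j ∈ Finset.Icc 2 d, p j γ with hTdef
    -- clean up absolute values
    rw [abs_of_nonneg hT0, abs_of_pos hR0] at h1 h2
    rw [abs_of_nonneg (div_nonneg (hp 1) hL0.le)] at h3 h4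
    rw [abs_of_pos hR0, abs_of_pos hL0] at hro4
    have hRL : R ≤ L / 4 := by linarith
    have hRk : (0:ℝ) ≤ R ^ (k+1) := pow_nonneg hR0.le _
    have hLk : (0:ℝ) < L ^ k := pow_pos hL0 _
    -- per-j bounds on the tail
    have habs : ∀ j ∈ Finset.Icc 2 d, L / 4 ≤ |L / (j:ℝ) - ℓ1 γ| ∧
        |L / (j:ℝ) - ℓ1 γ| ≤ L := by
      intro j hj
      rw [Finset.mem_Icc] at hj
      have hj2 : (2:ℝ) ≤ (j:ℝ) := by exact_mod_cast hj.1
      have hj0 : (0:ℝ) < (j:ℝ) := by linarith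
      have hdiv : L / (j:ℝ) ≤ L / 2 := by
        apply div_le_div_of_nonneg_left hL0.le (by norm_num) hj2
      have hdiv0 : 0 < L / (j:ℝ) := div_pos hL0 hj0
      rw [hl1, abs_of_nonpos (by linarith)]
      constructor <;> linarith
    have hcoef : ∀ j ∈ Finset.Icc 2 d,
        2 * (p j γ / L) ≤ (j:ℝ) * p j γ / L ∧
        (j:ℝ) * p j γ / L ≤ (d:ℝ) * (p j γ / L) := by
      intro j hj
      rw [Finset.mem_Icc] at hj
      have hj2 : (2:ℝ) ≤ (j:ℝ) := by exact_mod_cast hj.1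
      have hjd : (j:ℝ) ≤ (d:ℝ) := by exact_mod_cast hj.2
      have hpj : 0 ≤ p j γ / L := div_nonneg (hp j) hL0.le
      constructor
      · rw [mul_div_assoc]; exact mul_le_mul_of_nonneg_right hj2 hpj
      · rw [mul_div_assoc]; exact mul_le_mul_of_nonneg_right hjd hpj
    have hterm_ub : ∀ j ∈ Finset.Icc 2 d,
        |L / (j:ℝ) - ℓ1 γ| ^ (k+1) * ((j:ℝ) * p j γ / L)
          ≤ (d:ℝ) * (L ^ k * p j γ) := by
      intro j hj
      obtain ⟨_, hu⟩ := habs j hj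
      obtain ⟨_, hcu⟩ := hcoef j hj
      have h1' : |L / (j:ℝ) - ℓ1 γ| ^ (k+1) ≤ L ^ (k+1) :=
        pow_le_pow_left₀ (abs_nonneg _) hu _
      have hjpos : 0 ≤ (j:ℝ) * p j γ / L :=
        div_nonneg (mul_nonneg (Nat.cast_nonneg _) (hp j)) hL0.le
      calc |L / (j:ℝ) - ℓ1 γ| ^ (k+1) * ((j:ℝ) * p j γ / L)
          ≤ L ^ (k+1) * ((d:ℝ) * (p j γ / L)) :=
            mul_le_mul h1' hcu hjpos (pow_nonneg hL0.le _)
        _ = (d:ℝ) * (L ^ k * p j γ) := by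
            field_simp; ring
    have hterm_lb : ∀ j ∈ Finset.Icc 2 d,
        2 / 4 ^ (k+1) * (L ^ k * p j γ)
          ≤ |L / (j:ℝ) - ℓ1 γ| ^ (k+1) * ((j:ℝ) * p j γ / L) := by
      intro j hj
      obtain ⟨hl, _⟩ := habs j hj
      obtain ⟨hcl, _⟩ := hcoef j hj
      have h1' : (L / 4) ^ (k+1) ≤ |L / (j:ℝ) - ℓ1 γ| ^ (k+1) :=
        pow_le_pow_left₀ (div_nonneg hL0.le (by norm_num)) hl _
      have hpj : 0 ≤ p j γ / L := div_nonneg (hp j) hL0.le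
      calc 2 / 4 ^ (k+1) * (L ^ k * p j γ)
          = (L / 4) ^ (k+1) * (2 * (p j γ / L)) := by
            rw [div_pow]; field_simp; ring
        _ ≤ |L / (j:ℝ) - ℓ1 γ| ^ (k+1) * ((j:ℝ) * p j γ / L) :=
            mul_le_mul h1' hcl (by positivity) (pow_nonneg (abs_nonneg _) _)
    have hS_ub : ∑ j ∈ Finset.Icc 2 d,
        |L / (j:ℝ) - ℓ1 γ| ^ (k+1) * ((j:ℝ) * p j γ / L)
          ≤ (d:ℝ) * (L ^ k * T) := by
      calc _ ≤ ∑ j ∈ Finset.Icc 2 d, (d:ℝ) * (L ^ k * p j γ) :=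
            Finset.sum_le_sum hterm_ub
        _ = (d:ℝ) * (L ^ k * T) := by
            rw [hTdef, Finset.mul_sum, Finset.mul_sum]
    have hS_lb : 2 / 4 ^ (k+1) * (L ^ k * T)
        ≤ ∑ j ∈ Finset.Icc 2 d,
            |L / (j:ℝ) - ℓ1 γ| ^ (k+1) * ((j:ℝ) * p j γ / L) := by
      calc 2 / 4 ^ (k+1) * (L ^ k * T)
          = ∑ j ∈ Finset.Icc 2 d, 2 / 4 ^ (k+1) * (L ^ k * p j γ) := by
            rw [hTdef, Finset.mul_sum, Finset.mul_sum]
        _ ≤ _ := Finset.sum_le_sum hterm_lb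
    set S := ∑ j ∈ Finset.Icc 2 d,
        |L / (j:ℝ) - ℓ1 γ| ^ (k+1) * ((j:ℝ) * p j γ / L) with hSdef
    have hS0 : 0 ≤ S := Finset.sum_nonneg fun j hj => by
      rw [Finset.mem_Icc] at hj
      have : (0:ℝ) ≤ (j:ℝ) := Nat.cast_nonneg _
      have := hp j
      positivity
    have hFeq : F γ = R ^ (k+1) * (p 1 γ / L) + S := by
      rw [hF]; simp only
      rw [hsplit]
      congr 1
      push_cast
      rw [div_one, hl1, show L - (L - R) = R by ring, abs_of_pos hR0, one_mul]
    have hGeq : G γ = R ^ (k+1) + L ^ k * R := rfl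
    have hp1u : p 1 γ / L ≤ C3 := by linarith [h3]
    have hp1l : 1 ≤ C4 * (p 1 γ / L) := by linarith [h4]
    have hTu : T ≤ C1 * R := h1
    have hTl : R ≤ C2 * T := h2
    have h4k : (0:ℝ) < 4 ^ (k+1) := by positivity
    refine ⟨?_, ?_, ?_, ?_⟩
    · rw [hFeq]
      have : 0 ≤ p 1 γ / L := div_nonneg (hp 1) hL0.le
      positivity
    · rw [hGeq]; positivity
    · rw [hFeq, hGeq]
      have e1 : R ^ (k+1) * (p 1 γ / L) ≤ C3 * R ^ (k+1) := by
        rw [mul_comm C3 _]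
        exact mul_le_mul_of_nonneg_left hp1u hRk
      have e2 : S ≤ (d:ℝ) * C1 * (L ^ k * R) := by
        calc S ≤ (d:ℝ) * (L ^ k * T) := hS_ub
          _ ≤ (d:ℝ) * (L ^ k * (C1 * R)) := by
              apply mul_le_mul_of_nonneg_left _ (Nat.cast_nonneg d)
              exact mul_le_mul_of_nonneg_left hTu hLk.le
          _ = (d:ℝ) * C1 * (L ^ k * R) := by ring
      have n1 : 0 ≤ C3 * (L ^ k * R) :=
        mul_nonneg hC3pos.le (mul_nonneg hLk.le hR0.le)
      have n2 : 0 ≤ (d:ℝ) * C1 * R ^ (k+1) :=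
        mul_nonneg (mul_nonneg (Nat.cast_nonneg d) hC1pos.le) hRk
      have expand : (C3 + (d:ℝ) * C1) * (R ^ (k+1) + L ^ k * R)
          = C3 * R ^ (k+1) + (d:ℝ) * C1 * (L ^ k * R)
            + (C3 * (L ^ k * R) + (d:ℝ) * C1 * R ^ (k+1)) := by ring
      rw [expand]
      linarith
    · rw [hFeq, hGeq]
      have e1 : R ^ (k+1) ≤ C4 * (R ^ (k+1) * (p 1 γ / L)) := by
        calc R ^ (k+1) = R ^ (k+1) * 1 := by ring
          _ ≤ R ^ (k+1) * (C4 * (p 1 γ / L)) :=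
              mul_le_mul_of_nonneg_left hp1l hRk
          _ = C4 * (R ^ (k+1) * (p 1 γ / L)) := by ring
      have e2 : L ^ k * R ≤ 4 ^ (k+1) * C2 * S := by
        have h2' : L ^ k * T ≤ 4 ^ (k+1) / 2 * S := by
          rw [← sub_nonneg]
          have heq : 4 ^ (k+1) / 2 * S - L ^ k * T
              = 4 ^ (k+1) / 2 * (S - 2 / 4 ^ (k+1) * (L ^ k * T)) := by
            field_simp
          rw [heq]
          have := sub_nonneg.mpr hS_lb
          positivity
        calc L ^ k * R ≤ L ^ k * (C2 * T) :=
              mul_le_mul_of_nonneg_left hTl hLk.le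
          _ = C2 * (L ^ k * T) := by ring
          _ ≤ C2 * (4 ^ (k+1) / 2 * S) := mul_le_mul_of_nonneg_left h2' hC2pos.le
          _ = 4 ^ (k+1) * C2 / 2 * S := by ring
          _ ≤ 4 ^ (k+1) * C2 * S := by
              apply mul_le_mul_of_nonneg_right _ hS0
              linarith [mul_pos h4k hC2pos]
      have n1 : 0 ≤ C4 * S := mul_nonneg hC4pos.le hS0
      have n2 : 0 ≤ 4 ^ (k+1) * C2 * (R ^ (k+1) * (p 1 γ / L)) :=
        mul_nonneg (mul_nonneg h4k.le hC2pos.le)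
          (mul_nonneg hRk (div_nonneg (hp 1) hL0.le))
      have expand : (C4 + 4 ^ (k+1) * C2) * (R ^ (k+1) * (p 1 γ / L) + S)
          = C4 * (R ^ (k+1) * (p 1 γ / L)) + 4 ^ (k+1) * C2 * S
            + (C4 * S + 4 ^ (k+1) * C2 * (R ^ (k+1) * (p 1 γ / L))) := by ring
      rw [expand]
      linarith
  constructor
  · apply IsBigO.of_bound (C3 + (d:ℝ) * C1)
    filter_upwards [key] with γ ⟨hF0, hG0, hub, _⟩
    rw [Real.norm_eq_abs, Real.norm_eq_abs, abs_of_nonneg hF0, abs_of_nonneg hG0]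
    exact hub
  · apply IsBigO.of_bound (C4 + 4^(k+1) * C2)
    filter_upwards [key] with γ ⟨hF0, hG0, _, hlb⟩
    rw [Real.norm_eq_abs, Real.norm_eq_abs, abs_of_nonneg hF0, abs_of_nonneg hG0]
    exact hlb
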